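/- Let a⁺ = (a₁⁺, a₂⁺, a₃⁺, a₄⁺). For every r ∈ ℛ⁻ with r > 0 and every t ∈ [0, 1], h_r(t; a⁺) ≤ h_r(1; a⁺); and for every r ∈ ℛ⁺ and every t ∈ [0, 1], h_r(t; a⁺) ≥ h_r(1; a⁺). -/

import Mathlib

noncomputable section

open Real Filter

/-- Rankin's auxiliary function `h_r(t; a) = t^r − a₁t − a₂t² − a₃t³ − a₄t⁴`,
where `t ^ r` is the real power. -/
def hfun (r a₁ a₂ a₃ a₄ t : ℝ) : ℝ :=
  t ^ r - a₁ * t - a₂ * t ^ 2 - a₃ * t ^ 3 - a₄ * t ^ 4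

def P1p (r κ η : ℝ) : ℝ :=
  r * κ ^ (r - 1) * η * (κ - 1) * (η - κ) * (κ * η + 2 * κ + η) * (η - 1) ^ 2
    + 2 * (κ ^ r - 1) * κ * η * (η - 1) ^ 2 * (2 * κ * η + 4 * κ - η ^ 2 - 2 * η - 3)

def P2p (r κ η : ℝ) : ℝ :=
  r * κ ^ (r - 1) * (κ - 1) * (κ - η) * (η - 1) ^ 2 * (2 * κ * η + κ + η ^ 2 + 2 * η)
    + (η ^ r - 1) * (κ - 1) ^ 2 *
      (8 * κ * η ^ 2 + 4 * η ^ 2 - η * κ ^ 2 - 2 * κ * η - 3 * η - κ ^ 3 - 2 * κ ^ 2 - 3 * κ)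

def P3p (r κ η : ℝ) : ℝ :=
  r * κ ^ (r - 1) * (κ - 1) * (κ + 2 * η + 1) * (η - κ) * (η - 1) ^ 2
    + 2 * (κ ^ r - 1) * (2 * κ ^ 2 + 2 * κ * η - η ^ 2 - 2 * η - 1) * (η - 1) ^ 2

def P4p (r κ η : ℝ) : ℝ :=
  r * κ ^ (r - 1) * (κ - 1) * (κ - η) * (η - 1) ^ 2
    + (η ^ r - 1) * (κ - 1) ^ 2 * (3 * η - κ - 2)

/-- `κ₊ = (6 − √21)/20`. -/
def κp : ℝ := (6 - Real.sqrt 21) / 20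

/-- `η₊ = (6 + √21)/20`. -/
def ηp : ℝ := (6 + Real.sqrt 21) / 20

def a1p (r : ℝ) : ℝ :=
  (P1p r κp ηp - P1p r ηp κp) / ((κp - 1) ^ 2 * (ηp - 1) ^ 2 * (κp - ηp) ^ 3)

def a2p (r : ℝ) : ℝ :=
  (P2p r κp ηp - P2p r ηp κp) / ((κp - 1) ^ 2 * (ηp - 1) ^ 2 * (κp - ηp) ^ 3)

def a3p (r : ℝ) : ℝ :=
  (P3p r κp ηp - P3p r ηp κp) / ((κp - 1) ^ 2 * (ηp - 1) ^ 2 * (κp - ηp) ^ 3)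

def a4p (r : ℝ) : ℝ :=
  (P4p r κp ηp - P4p r ηp κp) / ((κp - 1) ^ 2 * (ηp - 1) ^ 2 * (κp - ηp) ^ 3)

/-- `a₀⁺ = 1 − a₁⁺ − a₂⁺ − a₃⁺ − a₄⁺`. -/
def a0p (r : ℝ) : ℝ := 1 - a1p r - a2p r - a3p r - a4p r

/-- `ℛ⁻ = (0,1] ∪ [2,3] ∪ [4,∞)`. -/
def Rminus : Set ℝ := Set.Ioc 0 1 ∪ Set.Icc 2 3 ∪ Set.Ici 4

/-- `ℛ⁺ = [1,2] ∪ [3,4]`. -/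
def Rplus : Set ℝ := Set.Icc 1 2 ∪ Set.Icc 3 4


section AuxProof

private lemma monoIccAux {f f' : ℝ → ℝ} (hd : ∀ x : ℝ, 0 < x → HasDerivAt f (f' x) x)
    {a b : ℝ} (ha : 0 < a) (hs : ∀ x ∈ Set.Ioo a b, 0 ≤ f' x) :
    MonotoneOn f (Set.Icc a b) := by
  apply monotoneOn_of_deriv_nonneg (convex_Icc a b)
  · intro x hx
    exact (hd x (ha.trans_le hx.1)).continuousAt.continuousWithinAt
  · intro x hx
    rw [interior_Icc] at hx
    exact (hd x (ha.trans hx.1)).differentiableAt.differentiableWithinAt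
  · intro x hx
    rw [interior_Icc] at hx
    rw [(hd x (ha.trans hx.1)).deriv]
    exact hs x hx

private lemma antiIccAux {f f' : ℝ → ℝ} (hd : ∀ x : ℝ, 0 < x → HasDerivAt f (f' x) x)
    {a b : ℝ} (ha : 0 < a) (hs : ∀ x ∈ Set.Ioo a b, f' x ≤ 0) :
    AntitoneOn f (Set.Icc a b) := by
  apply antitoneOn_of_deriv_nonpos (convex_Icc a b)
  · intro x hx
    exact (hd x (ha.trans_le hx.1)).continuousAt.continuousWithinAt
  · intro x hx
    rw [interior_Icc] at hx
    exact (hd x (ha.trans hx.1)).differentiableAt.differentiableWithinAt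
  · intro x hx
    rw [interior_Icc] at hx
    rw [(hd x (ha.trans hx.1)).deriv]
    exact hs x hx

/-- Core sign lemma: a function with double zeros at `κ < η` in `(0,1)`, a zero at `1`,
and fifth "derivative" `≤ 0` on `(0,1)` is nonnegative on `[0,1]`. -/
private lemma coreAux {g0 g1 g2 g3 g4 g5 : ℝ → ℝ} {κ η : ℝ}
    (hκ : 0 < κ) (hκη : κ < η) (hη : η < 1)
    (hd0 : ∀ x : ℝ, 0 < x → HasDerivAt g0 (g1 x) x)
    (hd1 : ∀ x : ℝ, 0 < x → HasDerivAt g1 (g2 x) x)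
    (hd2 : ∀ x : ℝ, 0 < x → HasDerivAt g2 (g3 x) x)
    (hd3 : ∀ x : ℝ, 0 < x → HasDerivAt g3 (g4 x) x)
    (hd4 : ∀ x : ℝ, 0 < x → HasDerivAt g4 (g5 x) x)
    (hcw : ContinuousWithinAt g0 (Set.Ioi 0) 0)
    (z0k : g0 κ = 0) (z0e : g0 η = 0) (z01 : g0 1 = 0)
    (z1k : g1 κ = 0) (z1e : g1 η = 0)
    (h5 : ∀ x ∈ Set.Ioo (0:ℝ) 1, g5 x ≤ 0) :
    ∀ t ∈ Set.Icc (0:ℝ) 1, 0 ≤ g0 t := by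
  have hη0 : 0 < η := hκ.trans hκη
  have c0 : ∀ {a b : ℝ}, 0 < a → ContinuousOn g0 (Set.Icc a b) := fun {a b} ha x hx =>
    (hd0 x (ha.trans_le hx.1)).continuousAt.continuousWithinAt
  have c1 : ∀ {a b : ℝ}, 0 < a → ContinuousOn g1 (Set.Icc a b) := fun {a b} ha x hx =>
    (hd1 x (ha.trans_le hx.1)).continuousAt.continuousWithinAt
  have c2 : ∀ {a b : ℝ}, 0 < a → ContinuousOn g2 (Set.Icc a b) := fun {a b} ha x hx =>
    (hd2 x (ha.trans_le hx.1)).continuousAt.continuousWithinAt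
  have c3 : ∀ {a b : ℝ}, 0 < a → ContinuousOn g3 (Set.Icc a b) := fun {a b} ha x hx =>
    (hd3 x (ha.trans_le hx.1)).continuousAt.continuousWithinAt
  obtain ⟨z1, hz1, ez1⟩ := exists_hasDerivAt_eq_zero hκη (c0 hκ) (z0k.trans z0e.symm)
    (fun x hx => hd0 x (hκ.trans hx.1))
  obtain ⟨z2, hz2, ez2⟩ := exists_hasDerivAt_eq_zero hη (c0 hη0) (z0e.trans z01.symm)
    (fun x hx => hd0 x (hη0.trans hx.1))
  obtain ⟨hκz1, hz1η⟩ := hz1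
  obtain ⟨hηz2, hz21⟩ := hz2
  have hz10 : 0 < z1 := hκ.trans hκz1
  obtain ⟨x1, hx1, ex1⟩ := exists_hasDerivAt_eq_zero hκz1 (c1 hκ) (z1k.trans ez1.symm)
    (fun x hx => hd1 x (hκ.trans hx.1))
  obtain ⟨x2, hx2, ex2⟩ := exists_hasDerivAt_eq_zero hz1η (c1 hz10) (ez1.trans z1e.symm)
    (fun x hx => hd1 x (hz10.trans hx.1))
  obtain ⟨x3, hx3, ex3⟩ := exists_hasDerivAt_eq_zero hηz2 (c1 hη0) (z1e.trans ez2.symm)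
    (fun x hx => hd1 x (hη0.trans hx.1))
  obtain ⟨hκx1, hx1z1⟩ := hx1
  obtain ⟨hz1x2, hx2η⟩ := hx2
  obtain ⟨hηx3, hx3z2⟩ := hx3
  have hx10 : 0 < x1 := hκ.trans hκx1
  have hx1x2 : x1 < x2 := hx1z1.trans hz1x2
  have hx2x3 : x2 < x3 := hx2η.trans hηx3
  have hx20 : 0 < x2 := hx10.trans hx1x2
  obtain ⟨t1, ht1, et1⟩ := exists_hasDerivAt_eq_zero hx1x2 (c2 hx10) (ex1.trans ex2.symm)
    (fun x hx => hd2 x (hx10.trans hx.1))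
  obtain ⟨t2, ht2, et2⟩ := exists_hasDerivAt_eq_zero hx2x3 (c2 hx20) (ex2.trans ex3.symm)
    (fun x hx => hd2 x (hx20.trans hx.1))
  obtain ⟨hx1t1, ht1x2⟩ := ht1
  obtain ⟨hx2t2, ht2x3⟩ := ht2
  have ht1t2 : t1 < t2 := ht1x2.trans hx2t2
  have ht10 : 0 < t1 := hx10.trans hx1t1
  obtain ⟨cc, hccm, ecc⟩ := exists_hasDerivAt_eq_zero ht1t2 (c3 ht10) (et1.trans et2.symm)
    (fun x hx => hd3 x (ht10.trans hx.1))
  obtain ⟨ht1c, hct2⟩ := hccm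
  have hx31 : x3 < 1 := hx3z2.trans hz21
  have ht21 : t2 < 1 := ht2x3.trans hx31
  have hcc1 : cc < 1 := hct2.trans ht21
  have hcc0 : 0 < cc := ht10.trans ht1c
  -- g4 signs
  have s4p : ∀ x : ℝ, 0 < x → x ≤ cc → 0 ≤ g4 x := by
    intro x hx hxc
    have h := antiIccAux hd4 hx (fun y hy => h5 y ⟨hx.trans hy.1, hy.2.trans hcc1⟩)
      (Set.mem_Icc.mpr ⟨le_rfl, hxc⟩) (Set.mem_Icc.mpr ⟨hxc, le_rfl⟩) hxc
    rw [ecc] at h; exact h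
  have s4n : ∀ x : ℝ, cc ≤ x → x < 1 → g4 x ≤ 0 := by
    intro x hcx hx1
    have h := antiIccAux hd4 hcc0 (fun y hy => h5 y ⟨hcc0.trans hy.1, hy.2.trans hx1⟩)
      (Set.mem_Icc.mpr ⟨le_rfl, hcx⟩) (Set.mem_Icc.mpr ⟨hcx, le_rfl⟩) hcx
    rw [ecc] at h; exact h
  -- g3 signs
  have s3n1 : ∀ x : ℝ, 0 < x → x ≤ t1 → g3 x ≤ 0 := by
    intro x hx h
    have h2 := monoIccAux hd3 hx (fun y hy => s4p y (hx.trans hy.1) (hy.2.le.trans ht1c.le))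
      (Set.mem_Icc.mpr ⟨le_rfl, h⟩) (Set.mem_Icc.mpr ⟨h, le_rfl⟩) h
    rw [et1] at h2; exact h2
  have s3p : ∀ x : ℝ, t1 ≤ x → x ≤ t2 → 0 ≤ g3 x := by
    intro x h1 h2
    rcases le_or_gt x cc with hxc | hcx
    · have h3 := monoIccAux hd3 ht10 (fun y hy => s4p y (ht10.trans hy.1) (hy.2.le.trans hxc))
        (Set.mem_Icc.mpr ⟨le_rfl, h1⟩) (Set.mem_Icc.mpr ⟨h1, le_rfl⟩) h1
      rw [et1] at h3; exact h3
    · have h3 := antiIccAux hd3 (hcc0.trans hcx)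
        (fun y hy => s4n y (hcx.le.trans hy.1.le) (hy.2.trans ht21))
        (Set.mem_Icc.mpr ⟨le_rfl, h2⟩) (Set.mem_Icc.mpr ⟨h2, le_rfl⟩) h2
      rw [et2] at h3; exact h3
  have s3n2 : ∀ x : ℝ, t2 ≤ x → x < 1 → g3 x ≤ 0 := by
    intro x h1 h2
    have h3 := antiIccAux hd3 (ht10.trans ht1t2)
      (fun y hy => s4n y (hct2.le.trans hy.1.le) (hy.2.trans h2))
      (Set.mem_Icc.mpr ⟨le_rfl, h1⟩) (Set.mem_Icc.mpr ⟨h1, le_rfl⟩) h1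
    rw [et2] at h3; exact h3
  -- g2 signs
  have s2p1 : ∀ x : ℝ, 0 < x → x ≤ x1 → 0 ≤ g2 x := by
    intro x hx h
    have h2 := antiIccAux hd2 hx (fun y hy => s3n1 y (hx.trans hy.1) (hy.2.le.trans hx1t1.le))
      (Set.mem_Icc.mpr ⟨le_rfl, h⟩) (Set.mem_Icc.mpr ⟨h, le_rfl⟩) h
    rw [ex1] at h2; exact h2
  have s2n : ∀ x : ℝ, x1 ≤ x → x ≤ x2 → g2 x ≤ 0 := by
    intro x h1 h2
    rcases le_or_gt x t1 with h3 | h3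
    · have h4 := antiIccAux hd2 hx10 (fun y hy => s3n1 y (hx10.trans hy.1) (hy.2.le.trans h3))
        (Set.mem_Icc.mpr ⟨le_rfl, h1⟩) (Set.mem_Icc.mpr ⟨h1, le_rfl⟩) h1
      rw [ex1] at h4; exact h4
    · have h4 := monoIccAux hd2 (ht10.trans h3)
        (fun y hy => s3p y (h3.le.trans hy.1.le) ((hy.2.trans hx2t2).le))
        (Set.mem_Icc.mpr ⟨le_rfl, h2⟩) (Set.mem_Icc.mpr ⟨h2, le_rfl⟩) h2
      rw [ex2] at h4; exact h4
  have s2p2 : ∀ x : ℝ, x2 ≤ x → x ≤ x3 → 0 ≤ g2 x := by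
    intro x h1 h2
    rcases le_or_gt x t2 with h3 | h3
    · have h4 := monoIccAux hd2 hx20
        (fun y hy => s3p y (ht1x2.le.trans hy.1.le) (hy.2.le.trans h3))
        (Set.mem_Icc.mpr ⟨le_rfl, h1⟩) (Set.mem_Icc.mpr ⟨h1, le_rfl⟩) h1
      rw [ex2] at h4; exact h4
    · have h4 := antiIccAux hd2 (ht10.trans (ht1t2.trans h3))
        (fun y hy => s3n2 y (h3.le.trans hy.1.le) (hy.2.trans hx31))
        (Set.mem_Icc.mpr ⟨le_rfl, h2⟩) (Set.mem_Icc.mpr ⟨h2, le_rfl⟩) h2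
      rw [ex3] at h4; exact h4
  have s2n2 : ∀ x : ℝ, x3 ≤ x → x < 1 → g2 x ≤ 0 := by
    intro x h1 h2
    have h4 := antiIccAux hd2 (hx20.trans hx2x3)
      (fun y hy => s3n2 y (ht2x3.le.trans hy.1.le) (hy.2.trans h2))
      (Set.mem_Icc.mpr ⟨le_rfl, h1⟩) (Set.mem_Icc.mpr ⟨h1, le_rfl⟩) h1
    rw [ex3] at h4; exact h4
  -- g1 signs
  have s1n1 : ∀ x : ℝ, 0 < x → x ≤ κ → g1 x ≤ 0 := by
    intro x hx h
    have h2 := monoIccAux hd1 hx (fun y hy => s2p1 y (hx.trans hy.1) ((hy.2.trans hκx1).le))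
      (Set.mem_Icc.mpr ⟨le_rfl, h⟩) (Set.mem_Icc.mpr ⟨h, le_rfl⟩) h
    rw [z1k] at h2; exact h2
  have s1p1 : ∀ x : ℝ, κ ≤ x → x ≤ z1 → 0 ≤ g1 x := by
    intro x h1 h2
    rcases le_or_gt x x1 with h3 | h3
    · have h4 := monoIccAux hd1 hκ (fun y hy => s2p1 y (hκ.trans hy.1) (hy.2.le.trans h3))
        (Set.mem_Icc.mpr ⟨le_rfl, h1⟩) (Set.mem_Icc.mpr ⟨h1, le_rfl⟩) h1
      rw [z1k] at h4; exact h4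
    · have h4 := antiIccAux hd1 (hx10.trans h3)
        (fun y hy => s2n y (h3.le.trans hy.1.le) ((hy.2.trans hz1x2).le))
        (Set.mem_Icc.mpr ⟨le_rfl, h2⟩) (Set.mem_Icc.mpr ⟨h2, le_rfl⟩) h2
      rw [ez1] at h4; exact h4
  have s1n2 : ∀ x : ℝ, z1 ≤ x → x ≤ η → g1 x ≤ 0 := by
    intro x h1 h2
    rcases le_or_gt x x2 with h3 | h3
    · have h4 := antiIccAux hd1 hz10
        (fun y hy => s2n y (hx1z1.le.trans hy.1.le) (hy.2.le.trans h3))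
        (Set.mem_Icc.mpr ⟨le_rfl, h1⟩) (Set.mem_Icc.mpr ⟨h1, le_rfl⟩) h1
      rw [ez1] at h4; exact h4
    · have h4 := monoIccAux hd1 (hx20.trans h3)
        (fun y hy => s2p2 y (h3.le.trans hy.1.le) ((hy.2.trans hηx3).le))
        (Set.mem_Icc.mpr ⟨le_rfl, h2⟩) (Set.mem_Icc.mpr ⟨h2, le_rfl⟩) h2
      rw [z1e] at h4; exact h4
  have s1p2 : ∀ x : ℝ, η ≤ x → x ≤ z2 → 0 ≤ g1 x := by
    intro x h1 h2
    rcases le_or_gt x x3 with h3 | h3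
    · have h4 := monoIccAux hd1 hη0
        (fun y hy => s2p2 y (hx2η.le.trans hy.1.le) (hy.2.le.trans h3))
        (Set.mem_Icc.mpr ⟨le_rfl, h1⟩) (Set.mem_Icc.mpr ⟨h1, le_rfl⟩) h1
      rw [z1e] at h4; exact h4
    · have h4 := antiIccAux hd1 (hx20.trans (hx2x3.trans h3))
        (fun y hy => s2n2 y (h3.le.trans hy.1.le) (hy.2.trans hz21))
        (Set.mem_Icc.mpr ⟨le_rfl, h2⟩) (Set.mem_Icc.mpr ⟨h2, le_rfl⟩) h2
      rw [ez2] at h4; exact h4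
  have s1n3 : ∀ x : ℝ, z2 ≤ x → x < 1 → g1 x ≤ 0 := by
    intro x h1 h2
    have h4 := antiIccAux hd1 (hη0.trans hηz2)
      (fun y hy => s2n2 y (hx3z2.le.trans hy.1.le) (hy.2.trans h2))
      (Set.mem_Icc.mpr ⟨le_rfl, h1⟩) (Set.mem_Icc.mpr ⟨h1, le_rfl⟩) h1
    rw [ez2] at h4; exact h4
  -- g0 sign
  have s0a : ∀ x : ℝ, 0 < x → x ≤ κ → 0 ≤ g0 x := by
    intro x hx h
    have h2 := antiIccAux hd0 hx (fun y hy => s1n1 y (hx.trans hy.1) hy.2.le)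
      (Set.mem_Icc.mpr ⟨le_rfl, h⟩) (Set.mem_Icc.mpr ⟨h, le_rfl⟩) h
    rw [z0k] at h2; exact h2
  intro t htmem
  obtain ⟨ht0, ht1le⟩ := htmem
  rcases eq_or_lt_of_le ht0 with h0 | h0
  · subst h0
    exact ge_of_tendsto hcw (Filter.eventually_of_mem
      (Ioo_mem_nhdsGT_of_mem (Set.mem_Ico.mpr ⟨le_rfl, hκ⟩)) (fun y hy => s0a y hy.1 hy.2.le))
  rcases le_or_gt t κ with h | h
  · exact s0a t h0 h
  rcases le_or_gt t z1 with h' | h'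
  · have h2 := monoIccAux hd0 hκ (fun y hy => s1p1 y hy.1.le (hy.2.le.trans h'))
      (Set.mem_Icc.mpr ⟨le_rfl, h.le⟩) (Set.mem_Icc.mpr ⟨h.le, le_rfl⟩) h.le
    rw [z0k] at h2; exact h2
  rcases le_or_gt t η with h'' | h''
  · have h2 := antiIccAux hd0 h0 (fun y hy => s1n2 y (h'.le.trans hy.1.le) hy.2.le)
      (Set.mem_Icc.mpr ⟨le_rfl, h''⟩) (Set.mem_Icc.mpr ⟨h'', le_rfl⟩) h''
    rw [z0e] at h2; exact h2
  rcases le_or_gt t z2 with h3 | h3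
  · have h2 := monoIccAux hd0 hη0 (fun y hy => s1p2 y hy.1.le (hy.2.le.trans h3))
      (Set.mem_Icc.mpr ⟨le_rfl, h''.le⟩) (Set.mem_Icc.mpr ⟨h''.le, le_rfl⟩) h''.le
    rw [z0e] at h2; exact h2
  · have h2 := antiIccAux hd0 h0 (fun y hy => s1n3 y (h3.le.trans hy.1.le) hy.2)
      (Set.mem_Icc.mpr ⟨le_rfl, ht1le⟩) (Set.mem_Icc.mpr ⟨ht1le, le_rfl⟩) ht1le
    rw [z01] at h2; exact h2

end AuxProof

private lemma kp_facts : 0 < κp ∧ κp < ηp ∧ ηp < 1 := by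
  have hs21a : Real.sqrt 21 < 5 := by
    have h := Real.sqrt_lt_sqrt (by norm_num : (0:ℝ) ≤ 21) (by norm_num : (21:ℝ) < 25)
    rwa [show (25:ℝ) = 5 ^ 2 by norm_num, Real.sqrt_sq (by norm_num : (0:ℝ) ≤ 5)] at h
  have hs21b : 4 < Real.sqrt 21 := by
    have h := Real.sqrt_lt_sqrt (by norm_num : (0:ℝ) ≤ 16) (by norm_num : (16:ℝ) < 21)
    rwa [show (16:ℝ) = 4 ^ 2 by norm_num, Real.sqrt_sq (by norm_num : (0:ℝ) ≤ 4)] at h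
  refine ⟨by unfold κp; linarith, by unfold κp ηp; linarith, by unfold ηp; linarith⟩

set_option maxHeartbeats 1000000 in
private lemma interp_conds (r : ℝ) :
    (a0p r + a1p r * κp + a2p r * κp ^ 2 + a3p r * κp ^ 3 + a4p r * κp ^ 4 = κp ^ r) ∧
    (a0p r + a1p r * ηp + a2p r * ηp ^ 2 + a3p r * ηp ^ 3 + a4p r * ηp ^ 4 = ηp ^ r) ∧
    (a1p r + 2 * a2p r * κp + 3 * a3p r * κp ^ 2 + 4 * a4p r * κp ^ 3 = r * κp ^ (r - 1)) ∧
    (a1p r + 2 * a2p r * ηp + 3 * a3p r * ηp ^ 2 + 4 * a4p r * ηp ^ 3 = r * ηp ^ (r - 1)) := by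
  obtain ⟨h0, h1, h2⟩ := kp_facts
  have hk1 : κp - 1 ≠ 0 := sub_ne_zero.mpr (ne_of_lt (h1.trans h2))
  have he1 : ηp - 1 ≠ 0 := sub_ne_zero.mpr (ne_of_lt h2)
  have hke : κp - ηp ≠ 0 := sub_ne_zero.mpr (ne_of_lt h1)
  refine ⟨?_, ?_, ?_, ?_⟩ <;>
  · simp only [a0p, a1p, a2p, a3p, a4p, P1p, P2p, P3p, P4p]
    generalize κp ^ (r - 1) = U
    generalize ηp ^ (r - 1) = V
    generalize κp ^ r = X
    generalize ηp ^ r = Y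
    field_simp
    ring

set_option maxHeartbeats 1000000 in
/-- For `r ∈ ℛ⁻` (so in particular `r > 0`) the function `h_r(·; a⁺)` is at most
`h_r(1; a⁺)` on `[0,1]`, while for `r ∈ ℛ⁺` it is at least `h_r(1; a⁺)` on `[0,1]`. -/
theorem hfun_extremum_plus_coeffs (r t : ℝ) (ht : t ∈ Set.Icc (0 : ℝ) 1) :
    (r ∈ Rminus → 0 < r →
      hfun r (a1p r) (a2p r) (a3p r) (a4p r) t ≤ hfun r (a1p r) (a2p r) (a3p r) (a4p r) 1) ∧
    (r ∈ Rplus →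
      hfun r (a1p r) (a2p r) (a3p r) (a4p r) 1 ≤ hfun r (a1p r) (a2p r) (a3p r) (a4p r) t) := by
  obtain ⟨hκ0, hκη, hη1⟩ := kp_facts
  obtain ⟨C1κ, C1η, C2κ, C2η⟩ := interp_conds r
  -- derivatives
  have hd0 : ∀ x : ℝ, 0 < x → HasDerivAt
      (fun y : ℝ => a0p r + a1p r * y + a2p r * y ^ 2 + a3p r * y ^ 3 + a4p r * y ^ 4 - y ^ r)
      (a1p r + 2 * a2p r * x + 3 * a3p r * x ^ 2 + 4 * a4p r * x ^ 3 - r * x ^ (r - 1)) x := by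
    intro x hx
    have hrp : HasDerivAt (fun y : ℝ => y ^ r) (r * x ^ (r - 1)) x :=
      Real.hasDerivAt_rpow_const (Or.inl hx.ne')
    have h := (((((hasDerivAt_const x (a0p r)).add
      ((hasDerivAt_id' x).const_mul (a1p r))).add
      ((hasDerivAt_pow 2 x).const_mul (a2p r))).add
      ((hasDerivAt_pow 3 x).const_mul (a3p r))).add
      ((hasDerivAt_pow 4 x).const_mul (a4p r))).sub hrp
    convert h using 1 <;> try rfl
    norm_num; ring
  have hd1 : ∀ x : ℝ, 0 < x → HasDerivAt
      (fun y : ℝ => a1p r + 2 * a2p r * y + 3 * a3p r * y ^ 2 + 4 * a4p r * y ^ 3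
        - r * y ^ (r - 1))
      (2 * a2p r + 6 * a3p r * x + 12 * a4p r * x ^ 2 - r * (r - 1) * x ^ (r - 2)) x := by
    intro x hx
    have hrp : HasDerivAt (fun y : ℝ => y ^ (r - 1)) ((r - 1) * x ^ (r - 2)) x := by
      have h := Real.hasDerivAt_rpow_const (x := x) (p := r - 1) (Or.inl hx.ne')
      rwa [show r - 1 - 1 = r - 2 by ring] at h
    have h := ((((hasDerivAt_const x (a1p r)).add
      ((hasDerivAt_id' x).const_mul (2 * a2p r))).add
      ((hasDerivAt_pow 2 x).const_mul (3 * a3p r))).add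
      ((hasDerivAt_pow 3 x).const_mul (4 * a4p r))).sub (hrp.const_mul r)
    convert h using 1 <;> try rfl
    norm_num; ring
  have hd2 : ∀ x : ℝ, 0 < x → HasDerivAt
      (fun y : ℝ => 2 * a2p r + 6 * a3p r * y + 12 * a4p r * y ^ 2 - r * (r - 1) * y ^ (r - 2))
      (6 * a3p r + 24 * a4p r * x - r * (r - 1) * (r - 2) * x ^ (r - 3)) x := by
    intro x hx
    have hrp : HasDerivAt (fun y : ℝ => y ^ (r - 2)) ((r - 2) * x ^ (r - 3)) x := by
      have h := Real.hasDerivAt_rpow_const (x := x) (p := r - 2) (Or.inl hx.ne')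
      rwa [show r - 2 - 1 = r - 3 by ring] at h
    have h := (((hasDerivAt_const x (2 * a2p r)).add
      ((hasDerivAt_id' x).const_mul (6 * a3p r))).add
      ((hasDerivAt_pow 2 x).const_mul (12 * a4p r))).sub (hrp.const_mul (r * (r - 1)))
    convert h using 1 <;> try rfl
    norm_num; ring
  have hd3 : ∀ x : ℝ, 0 < x → HasDerivAt
      (fun y : ℝ => 6 * a3p r + 24 * a4p r * y - r * (r - 1) * (r - 2) * y ^ (r - 3))
      (24 * a4p r - r * (r - 1) * (r - 2) * (r - 3) * x ^ (r - 4)) x := by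
    intro x hx
    have hrp : HasDerivAt (fun y : ℝ => y ^ (r - 3)) ((r - 3) * x ^ (r - 4)) x := by
      have h := Real.hasDerivAt_rpow_const (x := x) (p := r - 3) (Or.inl hx.ne')
      rwa [show r - 3 - 1 = r - 4 by ring] at h
    have h := ((hasDerivAt_const x (6 * a3p r)).add
      ((hasDerivAt_id' x).const_mul (24 * a4p r))).sub (hrp.const_mul (r * (r - 1) * (r - 2)))
    convert h using 1 <;> try rfl
    ring
  have hd4 : ∀ x : ℝ, 0 < x → HasDerivAt
      (fun y : ℝ => 24 * a4p r - r * (r - 1) * (r - 2) * (r - 3) * y ^ (r - 4))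
      (-(r * (r - 1) * (r - 2) * (r - 3) * (r - 4) * x ^ (r - 5))) x := by
    intro x hx
    have hrp : HasDerivAt (fun y : ℝ => y ^ (r - 4)) ((r - 4) * x ^ (r - 5)) x := by
      have h := Real.hasDerivAt_rpow_const (x := x) (p := r - 4) (Or.inl hx.ne')
      rwa [show r - 4 - 1 = r - 5 by ring] at h
    have h := (hasDerivAt_const x (24 * a4p r)).sub
      (hrp.const_mul (r * (r - 1) * (r - 2) * (r - 3)))
    convert h using 1 <;> try rfl
    ring
  -- zeros
  have z0k : a0p r + a1p r * κp + a2p r * κp ^ 2 + a3p r * κp ^ 3 + a4p r * κp ^ 4 - κp ^ r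
      = 0 := sub_eq_zero_of_eq C1κ
  have z0e : a0p r + a1p r * ηp + a2p r * ηp ^ 2 + a3p r * ηp ^ 3 + a4p r * ηp ^ 4 - ηp ^ r
      = 0 := sub_eq_zero_of_eq C1η
  have z01 : a0p r + a1p r * 1 + a2p r * 1 ^ 2 + a3p r * 1 ^ 3 + a4p r * 1 ^ 4 - (1:ℝ) ^ r
      = 0 := by
    rw [Real.one_rpow]; simp only [a0p]; ring
  have z1k : a1p r + 2 * a2p r * κp + 3 * a3p r * κp ^ 2 + 4 * a4p r * κp ^ 3
      - r * κp ^ (r - 1) = 0 := sub_eq_zero_of_eq C2κ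
  have z1e : a1p r + 2 * a2p r * ηp + 3 * a3p r * ηp ^ 2 + 4 * a4p r * ηp ^ 3
      - r * ηp ^ (r - 1) = 0 := sub_eq_zero_of_eq C2η
  constructor
  · -- r ∈ ℛ⁻
    intro hrm hr0
    have hcw : ContinuousWithinAt
        (fun y : ℝ => a0p r + a1p r * y + a2p r * y ^ 2 + a3p r * y ^ 3 + a4p r * y ^ 4 - y ^ r)
        (Set.Ioi 0) 0 := by
      apply ContinuousWithinAt.sub
      · exact Continuous.continuousWithinAt
          ((((continuous_const.add (continuous_const.mul continuous_id)).add
            (continuous_const.mul (continuous_pow 2))).add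
            (continuous_const.mul (continuous_pow 3))).add
            (continuous_const.mul (continuous_pow 4)))
      · exact (Real.continuousAt_rpow_const 0 r (Or.inr hr0.le)).continuousWithinAt
    have hQ : 0 ≤ r * (r - 1) * (r - 2) * (r - 3) * (r - 4) := by
      rcases hrm with (h | h) | h
      · nlinarith [mul_nonneg (mul_nonneg (mul_nonneg
          (mul_nonneg h.1.le (by linarith [h.2] : (0:ℝ) ≤ 1 - r))
          (by linarith [h.2] : (0:ℝ) ≤ 2 - r)) (by linarith [h.2] : (0:ℝ) ≤ 3 - r))
          (by linarith [h.2] : (0:ℝ) ≤ 4 - r)]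
      · nlinarith [mul_nonneg (mul_nonneg (mul_nonneg
          (mul_nonneg (by linarith [h.1] : (0:ℝ) ≤ r) (by linarith [h.1] : (0:ℝ) ≤ r - 1))
          (by linarith [h.1] : (0:ℝ) ≤ r - 2)) (by linarith [h.2] : (0:ℝ) ≤ 3 - r))
          (by linarith [h.2] : (0:ℝ) ≤ 4 - r)]
      · have h4 : (4:ℝ) ≤ r := h
        nlinarith [mul_nonneg (mul_nonneg (mul_nonneg
          (mul_nonneg (by linarith : (0:ℝ) ≤ r) (by linarith : (0:ℝ) ≤ r - 1))
          (by linarith : (0:ℝ) ≤ r - 2)) (by linarith : (0:ℝ) ≤ r - 3))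
          (by linarith : (0:ℝ) ≤ r - 4)]
    have h5 : ∀ x ∈ Set.Ioo (0:ℝ) 1,
        -(r * (r - 1) * (r - 2) * (r - 3) * (r - 4) * x ^ (r - 5)) ≤ 0 := by
      intro x hx
      exact neg_nonpos.mpr (mul_nonneg hQ (Real.rpow_pos_of_pos hx.1 (r - 5)).le)
    have key := coreAux hκ0 hκη hη1 hd0 hd1 hd2 hd3 hd4 hcw z0k z0e z01 z1k z1e h5 t ht
    have key' : 0 ≤ a0p r + a1p r * t + a2p r * t ^ 2 + a3p r * t ^ 3 + a4p r * t ^ 4 - t ^ r :=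
      key
    have ha0 : a0p r = 1 - a1p r - a2p r - a3p r - a4p r := rfl
    rw [ha0] at key'
    simp only [hfun, Real.one_rpow, mul_one, one_pow]
    linarith
  · -- r ∈ ℛ⁺
    intro hrp
    have hr0 : 0 < r := by rcases hrp with h | h <;> linarith [h.1]
    have hcw : ContinuousWithinAt
        (fun y : ℝ => -(a0p r + a1p r * y + a2p r * y ^ 2 + a3p r * y ^ 3 + a4p r * y ^ 4
          - y ^ r)) (Set.Ioi 0) 0 := by
      apply ContinuousWithinAt.neg
      apply ContinuousWithinAt.sub
      · exact Continuous.continuousWithinAt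
          ((((continuous_const.add (continuous_const.mul continuous_id)).add
            (continuous_const.mul (continuous_pow 2))).add
            (continuous_const.mul (continuous_pow 3))).add
            (continuous_const.mul (continuous_pow 4)))
      · exact (Real.continuousAt_rpow_const 0 r (Or.inr hr0.le)).continuousWithinAt
    have hQ : r * (r - 1) * (r - 2) * (r - 3) * (r - 4) ≤ 0 := by
      rcases hrp with h | h
      · nlinarith [mul_nonneg (mul_nonneg (mul_nonneg
          (mul_nonneg (by linarith [h.1] : (0:ℝ) ≤ r) (by linarith [h.1] : (0:ℝ) ≤ r - 1))
          (by linarith [h.2] : (0:ℝ) ≤ 2 - r)) (by linarith [h.2] : (0:ℝ) ≤ 3 - r))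
          (by linarith [h.2] : (0:ℝ) ≤ 4 - r)]
      · nlinarith [mul_nonneg (mul_nonneg (mul_nonneg
          (mul_nonneg (by linarith [h.1] : (0:ℝ) ≤ r) (by linarith [h.1] : (0:ℝ) ≤ r - 1))
          (by linarith [h.1] : (0:ℝ) ≤ r - 2)) (by linarith [h.1] : (0:ℝ) ≤ r - 3))
          (by linarith [h.2] : (0:ℝ) ≤ 4 - r)]
    have h5 : ∀ x ∈ Set.Ioo (0:ℝ) 1,
        -(-(r * (r - 1) * (r - 2) * (r - 3) * (r - 4) * x ^ (r - 5))) ≤ 0 := by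
      intro x hx
      rw [neg_neg]
      have hp := (Real.rpow_pos_of_pos hx.1 (r - 5)).le
      nlinarith [mul_nonneg (neg_nonneg.mpr hQ) hp]
    have key := coreAux (g0 := fun y : ℝ =>
        -(a0p r + a1p r * y + a2p r * y ^ 2 + a3p r * y ^ 3 + a4p r * y ^ 4 - y ^ r))
      (g1 := fun y : ℝ => -(a1p r + 2 * a2p r * y + 3 * a3p r * y ^ 2 + 4 * a4p r * y ^ 3
        - r * y ^ (r - 1)))
      (g2 := fun y : ℝ => -(2 * a2p r + 6 * a3p r * y + 12 * a4p r * y ^ 2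
        - r * (r - 1) * y ^ (r - 2)))
      (g3 := fun y : ℝ => -(6 * a3p r + 24 * a4p r * y - r * (r - 1) * (r - 2) * y ^ (r - 3)))
      (g4 := fun y : ℝ => -(24 * a4p r - r * (r - 1) * (r - 2) * (r - 3) * y ^ (r - 4)))
      (g5 := fun y : ℝ => -(-(r * (r - 1) * (r - 2) * (r - 3) * (r - 4) * y ^ (r - 5))))
      hκ0 hκη hη1 (fun x hx => (hd0 x hx).neg) (fun x hx => (hd1 x hx).neg)
      (fun x hx => (hd2 x hx).neg) (fun x hx => (hd3 x hx).neg) (fun x hx => (hd4 x hx).neg)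
      hcw (neg_eq_zero.mpr z0k) (neg_eq_zero.mpr z0e) (neg_eq_zero.mpr z01)
      (neg_eq_zero.mpr z1k) (neg_eq_zero.mpr z1e) h5 t ht
    have key' : 0 ≤
        -(a0p r + a1p r * t + a2p r * t ^ 2 + a3p r * t ^ 3 + a4p r * t ^ 4 - t ^ r) := key
    have ha0 : a0p r = 1 - a1p r - a2p r - a3p r - a4p r := rfl
    rw [ha0] at key'
    simp only [hfun, Real.one_rpow, mul_one, one_pow]
    linarith
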